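/- Let V be a finite-dimensional inner product space with orthogonal unit-norm-scaled basis vectors e₀, e₁, e₂ (pairwise orthogonal, with ‖e₁‖ = ‖e₂‖). Define the orbit O = {A e₀ + B(cos α · e₁ + sin α · e₂) : α ∈ ℝ} for fixed A ∈ ℝ, B ≥ 0. If w = A' e₀ + B'(cos α' · e₁ + sin α' · e₂) with B' ≥ 0 satisfies ‖w - v‖ = dist(w, O) for some v = A e₀ + B(cos α e₁ + sin α e₂) ∈ O, then ‖w - v‖² = (A - A')² ‖e₀‖² + (B - B')² ‖e₁‖². -/
import Mathlib


open scoped RealInnerProductSpace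

private lemma normsq_aux {V : Type*} [NormedAddCommGroup V] [InnerProductSpace ℝ V]
    (e₀ e₁ e₂ : V)
    (h01 : ⟪e₀, e₁⟫ = 0) (h02 : ⟪e₀, e₂⟫ = 0) (h12 : ⟪e₁, e₂⟫ = 0)
    (a b c : ℝ) :
    ‖a • e₀ + b • e₁ + c • e₂‖ ^ 2 = a ^ 2 * ‖e₀‖ ^ 2 + b ^ 2 * ‖e₁‖ ^ 2 + c ^ 2 * ‖e₂‖ ^ 2 := by
  have h10 : ⟪e₁, e₀⟫ = 0 := by rw [real_inner_comm]; exact h01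
  have h20 : ⟪e₂, e₀⟫ = 0 := by rw [real_inner_comm]; exact h02
  have h21 : ⟪e₂, e₁⟫ = 0 := by rw [real_inner_comm]; exact h12
  have := real_inner_self_eq_norm_sq (a • e₀ + b • e₁ + c • e₂)
  rw [← this]
  simp only [inner_add_left, inner_add_right, real_inner_smul_left, real_inner_smul_right,
    h01, h02, h12, h10, h20, h21, real_inner_self_eq_norm_sq]
  simp [norm_smul, mul_pow, sq_abs]

/-- Let `e₀, e₁, e₂` be pairwise orthogonal nonzero vectors with `‖e₁‖ = ‖e₂‖` in a real
inner product space, and let `O = {A e₀ + B (cos α e₁ + sin α e₂) : α ∈ ℝ}` for fixed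
`A ∈ ℝ`, `B ≥ 0`.  If `w = A' e₀ + B' (cos α' e₁ + sin α' e₂)` with `B' ≥ 0` realizes its
distance to `O` at `v = A e₀ + B (cos α e₁ + sin α e₂) ∈ O`, then
`‖w - v‖² = (A - A')² ‖e₀‖² + (B - B')² ‖e₁‖²`. -/
theorem dist_to_orbit_of_closest {V : Type*} [NormedAddCommGroup V]
    [InnerProductSpace ℝ V]
    (e₀ e₁ e₂ : V) (he₀ : e₀ ≠ 0) (he₁ : e₁ ≠ 0) (he₂ : e₂ ≠ 0)
    (h01 : ⟪e₀, e₁⟫ = 0) (h02 : ⟪e₀, e₂⟫ = 0) (h12 : ⟪e₁, e₂⟫ = 0)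
    (hnorm : ‖e₁‖ = ‖e₂‖)
    (A A' B B' α α' : ℝ) (hB : 0 ≤ B) (hB' : 0 ≤ B')
    (O : Set V)
    (hO : O = {u : V | ∃ β : ℝ, u = A • e₀ + B • (Real.cos β • e₁ + Real.sin β • e₂)})
    (v w : V)
    (hv : v = A • e₀ + B • (Real.cos α • e₁ + Real.sin α • e₂))
    (hw : w = A' • e₀ + B' • (Real.cos α' • e₁ + Real.sin α' • e₂))
    (hclosest : ‖w - v‖ = Metric.infDist w O) :
    ‖w - v‖ ^ 2 = (A - A') ^ 2 * ‖e₀‖ ^ 2 + (B - B') ^ 2 * ‖e₁‖ ^ 2 := by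
  -- general expansion for any β
  have key : ∀ β : ℝ,
      ‖w - (A • e₀ + B • (Real.cos β • e₁ + Real.sin β • e₂))‖ ^ 2
      = (A - A') ^ 2 * ‖e₀‖ ^ 2
        + (B ^ 2 + B' ^ 2 - 2 * B * B' * Real.cos (β - α')) * ‖e₁‖ ^ 2 := by
    intro β
    have hdiff : w - (A • e₀ + B • (Real.cos β • e₁ + Real.sin β • e₂))
        = (A' - A) • e₀ + (B' * Real.cos α' - B * Real.cos β) • e₁
          + (B' * Real.sin α' - B * Real.sin β) • e₂ := by
      rw [hw]
      module
    rw [hdiff, normsq_aux e₀ e₁ e₂ h01 h02 h12, ← hnorm]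
    have hcs : Real.cos (β - α') = Real.cos β * Real.cos α' + Real.sin β * Real.sin α' :=
      Real.cos_sub β α'
    have h1 := Real.sin_sq_add_cos_sq β
    have h2 := Real.sin_sq_add_cos_sq α'
    have hs : (B' * Real.cos α' - B * Real.cos β) ^ 2 + (B' * Real.sin α' - B * Real.sin β) ^ 2
        = B ^ 2 + B' ^ 2 - 2 * B * B' * Real.cos (β - α') := by
      rw [hcs]; linear_combination B' ^ 2 * h2 + B ^ 2 * h1
    linear_combination ‖e₁‖ ^ 2 * hs
  have hvkey : ‖w - v‖ ^ 2 = (A - A') ^ 2 * ‖e₀‖ ^ 2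
      + (B ^ 2 + B' ^ 2 - 2 * B * B' * Real.cos (α - α')) * ‖e₁‖ ^ 2 := by
    rw [hv]; exact key α
  -- upper bound: infDist ≤ dist to point with β = α'
  have hmem : A • e₀ + B • (Real.cos α' • e₁ + Real.sin α' • e₂) ∈ O := by
    rw [hO]; exact ⟨α', rfl⟩
  have hle : ‖w - v‖ ≤ ‖w - (A • e₀ + B • (Real.cos α' • e₁ + Real.sin α' • e₂))‖ := by
    rw [hclosest]
    simpa [dist_eq_norm] using Metric.infDist_le_dist_of_mem hmem
  have hle2 : ‖w - v‖ ^ 2 ≤ ‖w - (A • e₀ + B • (Real.cos α' • e₁ + Real.sin α' • e₂))‖ ^ 2 :=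
    pow_le_pow_left₀ (norm_nonneg _) hle 2
  rw [key α'] at hle2
  simp only [sub_self, Real.cos_zero] at hle2
  have hcosle : Real.cos (α - α') ≤ 1 := Real.cos_le_one _
  nlinarith [sq_nonneg ‖e₁‖, mul_nonneg hB hB', hvkey,
    mul_nonneg (mul_nonneg (mul_nonneg hB hB') (by linarith : (0:ℝ) ≤ 1 - Real.cos (α - α'))) (sq_nonneg ‖e₁‖)]
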